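/- For every integer N ≥ 1, the number of elements of exact additive order N in the group (ℤ/Nℤ)² equals N² ∏_{p | N} (1 − p^{−2}), where the product runs over all prime divisors p of N. -/

import Mathlib

/-- Every element of `(ZMod n)²` has additive order dividing `n`. -/
lemma aux_order_dvd_zmod_sq (n : ℕ) (x : ZMod n × ZMod n) : addOrderOf x ∣ n := by
  apply addOrderOf_dvd_of_nsmul_eq_zero
  have h1 : ∀ a : ZMod n, n • a = 0 := fun a => by
    rw [nsmul_eq_mul, ZMod.natCast_self, zero_mul]
  exact Prod.ext (h1 x.1) (h1 x.2)

/-- The number of elements of `ZMod (p^k)` whose value is divisible by `p` is `p^(k-1)`. -/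
lemma aux_card_pdvd (p k : ℕ) (hp : p.Prime) (hk : 1 ≤ k) :
    Nat.card {a : ZMod (p ^ k) // p ∣ a.val} = p ^ (k - 1) := by
  haveI : NeZero (p ^ k) := ⟨pow_ne_zero _ hp.pos.ne'⟩
  have hpk : p ^ (k - 1) * p = p ^ k := by
    rw [← pow_succ, Nat.sub_add_cancel hk]
  have e : {a : ZMod (p ^ k) // p ∣ a.val} ≃ Fin (p ^ (k - 1)) := by
    refine ⟨fun a => ⟨a.1.val / p, ?_⟩, fun j => ⟨((p * j.1 : ℕ) : ZMod (p ^ k)), ?_⟩, ?_, ?_⟩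
    · rw [Nat.div_lt_iff_lt_mul hp.pos, hpk]
      exact a.1.val_lt
    · have hlt : p * j.1 < p ^ k := by
        rw [← hpk, mul_comm]
        exact Nat.mul_lt_mul_of_lt_of_le j.2 le_rfl hp.pos
      rw [ZMod.val_natCast_of_lt hlt]
      exact dvd_mul_right _ _
    · rintro ⟨a, ha⟩
      ext
      simp only
      rw [Nat.mul_div_cancel' ha, ZMod.natCast_rightInverse a]
    · rintro ⟨j, hj⟩
      have hlt : p * j < p ^ k := by
        rw [← hpk, mul_comm]
        exact Nat.mul_lt_mul_of_lt_of_le hj le_rfl hp.pos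
      ext
      simp only
      rw [ZMod.val_natCast_of_lt hlt, Nat.mul_div_cancel_left _ hp.pos]
  rw [Nat.card_congr e, Nat.card_eq_fintype_card, Fintype.card_fin]

/-- Torsion criterion in `ZMod (p^k)`. -/
lemma aux_tor_iff (p k : ℕ) (hp : p.Prime) (hk : 1 ≤ k) (a : ZMod (p ^ k)) :
    addOrderOf a ∣ p ^ (k - 1) ↔ p ∣ a.val := by
  haveI : NeZero (p ^ k) := ⟨pow_ne_zero _ hp.pos.ne'⟩
  rw [addOrderOf_dvd_iff_nsmul_eq_zero]
  have : (p ^ (k - 1)) • a = ((p ^ (k - 1) * a.val : ℕ) : ZMod (p ^ k)) := by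
    rw [nsmul_eq_mul, Nat.cast_mul, ZMod.natCast_val, ZMod.cast_id]
  rw [this, ZMod.natCast_eq_zero_iff]
  constructor
  · intro h
    have h2 : p ^ (k - 1) * p ∣ p ^ (k - 1) * a.val := by
      rwa [← pow_succ, Nat.sub_add_cancel hk] at *
    exact (mul_dvd_mul_iff_left (pow_ne_zero _ hp.pos.ne' : p ^ (k-1) ≠ 0)).mp h2
  · intro h
    calc p ^ k = p ^ (k - 1) * p := by rw [← pow_succ, Nat.sub_add_cancel hk]
    _ ∣ p ^ (k - 1) * a.val := mul_dvd_mul_left _ h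

/-- Count of elements of exact order `p^k` in `(ZMod (p^k))²`. -/
lemma aux_pp (p k : ℕ) (hp : p.Prime) (hk : 1 ≤ k) :
    Nat.card {x : ZMod (p ^ k) × ZMod (p ^ k) // addOrderOf x = p ^ k} =
      p ^ (2 * k) - p ^ (2 * k - 2) := by
  classical
  haveI : NeZero (p ^ k) := ⟨pow_ne_zero _ hp.pos.ne'⟩
  have hdvd : ∀ x : ZMod (p ^ k) × ZMod (p ^ k), addOrderOf x ∣ p ^ k :=
    aux_order_dvd_zmod_sq (p ^ k)
  have key : ∀ x : ZMod (p ^ k) × ZMod (p ^ k),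
      ¬ (addOrderOf x = p ^ k) ↔ (p ∣ x.1.val ∧ p ∣ x.2.val) := by
    intro x
    rw [← aux_tor_iff p k hp hk x.1, ← aux_tor_iff p k hp hk x.2]
    rw [show addOrderOf x = Nat.lcm (addOrderOf x.1) (addOrderOf x.2) from Prod.addOrderOf x,
      ← Nat.lcm_dvd_iff]
    constructor
    · intro h
      obtain ⟨j, hj, hje⟩ := (Nat.dvd_prime_pow hp).mp (hdvd x)
      rw [show addOrderOf x = Nat.lcm (addOrderOf x.1) (addOrderOf x.2) from
        Prod.addOrderOf x] at hje
      rw [hje] at h ⊢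
      have : j ≠ k := fun hc => h (by rw [hc])
      exact pow_dvd_pow p (by omega)
    · intro h hc
      rw [hc] at h
      have := (Nat.pow_dvd_pow_iff_le_right hp.one_lt).mp h
      omega
  have e1 : {x : ZMod (p ^ k) × ZMod (p ^ k) // addOrderOf x = p ^ k} ≃
      {x : ZMod (p ^ k) × ZMod (p ^ k) // ¬ (p ∣ x.1.val ∧ p ∣ x.2.val)} :=
    Equiv.subtypeEquivRight (fun x => by rw [← key x, not_not])
  rw [Nat.card_congr e1, Nat.card_eq_fintype_card, Fintype.card_subtype_compl]
  have e2 : {x : ZMod (p ^ k) × ZMod (p ^ k) // p ∣ x.1.val ∧ p ∣ x.2.val} ≃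
      {a : ZMod (p ^ k) // p ∣ a.val} × {b : ZMod (p ^ k) // p ∣ b.val} :=
    Equiv.subtypeProdEquivProd (p := fun a : ZMod (p ^ k) => p ∣ a.val)
      (q := fun b : ZMod (p ^ k) => p ∣ b.val)
  have c2 : Fintype.card {x : ZMod (p ^ k) × ZMod (p ^ k) // p ∣ x.1.val ∧ p ∣ x.2.val}
      = p ^ (2 * k - 2) := by
    rw [← Nat.card_eq_fintype_card, Nat.card_congr e2, Nat.card_prod,
      aux_card_pdvd p k hp hk, ← pow_add]
    congr 1
    omega
  rw [c2, Fintype.card_prod, ZMod.card, ← pow_add]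
  congr 2
  omega

/-- Multiplicativity of the count of exact-order elements. -/
lemma aux_mul (m n : ℕ) (hm : 0 < m) (hn : 0 < n) (h : Nat.Coprime m n) :
    Nat.card {x : ZMod (m * n) × ZMod (m * n) // addOrderOf x = m * n} =
      Nat.card {y : ZMod m × ZMod m // addOrderOf y = m} *
        Nat.card {z : ZMod n × ZMod n // addOrderOf z = n} := by
  let c := (ZMod.chineseRemainder h).toAddEquiv
  let f : (ZMod (m * n)) × (ZMod (m * n)) ≃+ (ZMod m × ZMod m) × (ZMod n × ZMod n) :=
    (AddEquiv.prodCongr c c).trans (AddEquiv.prodProdProdComm _ _ _ _)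
  have hf : ∀ x, addOrderOf (f x) = addOrderOf x := fun x =>
    addOrderOf_injective f.toAddMonoidHom f.injective x
  have key : ∀ w : (ZMod m × ZMod m) × (ZMod n × ZMod n),
      addOrderOf w = m * n ↔ (addOrderOf w.1 = m ∧ addOrderOf w.2 = n) := by
    intro w
    have hd1 : addOrderOf w.1 ∣ m := aux_order_dvd_zmod_sq m w.1
    have hd2 : addOrderOf w.2 ∣ n := aux_order_dvd_zmod_sq n w.2
    have hcop : Nat.Coprime (addOrderOf w.1) (addOrderOf w.2) :=
      Nat.Coprime.coprime_dvd_left hd1 (Nat.Coprime.coprime_dvd_right hd2 h)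
    rw [show addOrderOf w = Nat.lcm (addOrderOf w.1) (addOrderOf w.2) from Prod.addOrderOf w,
      Nat.Coprime.lcm_eq_mul hcop]
    constructor
    · intro heq
      have h1 : addOrderOf w.1 ≤ m := Nat.le_of_dvd hm hd1
      have h2 : addOrderOf w.2 ≤ n := Nat.le_of_dvd hn hd2
      have he1 : addOrderOf w.1 = m := by
        rcases lt_or_eq_of_le h1 with hlt | he
        · exfalso
          have := Nat.mul_lt_mul_of_lt_of_le hlt h2 hn
          omega
        · exact he
      refine ⟨he1, ?_⟩
      rw [he1] at heq
      exact Nat.eq_of_mul_eq_mul_left hm heq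
    · rintro ⟨h1, h2⟩
      rw [h1, h2]
  have e : {x : ZMod (m * n) × ZMod (m * n) // addOrderOf x = m * n} ≃
      {y : ZMod m × ZMod m // addOrderOf y = m} ×
        {z : ZMod n × ZMod n // addOrderOf z = n} :=
    ((Equiv.subtypeEquiv f.toEquiv (fun x => by rw [show f.toEquiv x = f x from rfl, hf x])).trans
      (Equiv.subtypeEquivRight key)).trans
      (Equiv.subtypeProdEquivProd
        (p := fun y : ZMod m × ZMod m => addOrderOf y = m)
        (q := fun z : ZMod n × ZMod n => addOrderOf z = n))
  rw [Nat.card_congr e, Nat.card_prod]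

/-- For every integer `N ≥ 1`, the number of elements of exact additive order `N` in
`(ℤ/Nℤ)²` equals `N² ∏_{p ∣ N} (1 - p⁻²)`, the product running over the prime
divisors of `N`. -/
theorem card_exact_order_zmod_sq (N : ℕ) (hN : 1 ≤ N) :
    (Nat.card {x : ZMod N × ZMod N // addOrderOf x = N} : ℝ) =
      N ^ 2 * ∏ p ∈ N.primeFactors, (1 - ((p : ℝ)) ^ (-2 : ℤ)) := by
  revert hN
  induction N using Nat.recOnPosPrimePosCoprime with
  | prime_pow p k hp hk =>
    intro _
    rw [aux_pp p k hp hk, Nat.primeFactors_prime_pow hk.ne' hp,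
      Finset.prod_singleton]
    obtain ⟨k', rfl⟩ : ∃ k', k = k' + 1 := ⟨k - 1, by omega⟩
    have e2 : 2 * (k' + 1) - 2 = 2 * k' := by omega
    rw [e2, Nat.cast_sub (Nat.pow_le_pow_right hp.pos (by omega))]
    push_cast
    have hp0 : (p : ℝ) ≠ 0 := Nat.cast_ne_zero.mpr hp.pos.ne'
    rw [zpow_neg, show ((2:ℤ) = (2:ℕ)) from rfl, zpow_natCast]
    have h1 : 2 * (k' + 1) = 2 * k' + 2 := by ring
    rw [h1]
    field_simp
    ring
  | zero =>
    intro h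
    exact absurd h (by omega)
  | one =>
    intro _
    haveI : Unique {x : ZMod 1 × ZMod 1 // addOrderOf x = 1} :=
      uniqueOfSubsingleton ⟨0, addOrderOf_zero⟩
    rw [Nat.card_unique]
    simp
  | coprime a b ha hb hab iha ihb =>
    intro _
    have ha0 : a ≠ 0 := by omega
    have hb0 : b ≠ 0 := by omega
    rw [aux_mul a b (by omega) (by omega) hab, Nat.cast_mul,
      iha (by omega), ihb (by omega),
      Nat.primeFactors_mul ha0 hb0,
      Finset.prod_union hab.disjoint_primeFactors]
    push_cast
    ring
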